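/- Heat semigroup formula for the positive fractional power, weak form (Lemma 2.6(1)): for every s ∈ (0,1), every u ∈ D(L^s) and every w ∈ H, the function t ↦ (⟨e^{-tL} u, w⟩ − ⟨u, w⟩) t^{-1-s} is Lebesgue integrable on (0,∞) and ⟨L^{s} u, w⟩ = (1/Γ(−s)) ∫₀^∞ (⟨e^{-tL} u, w⟩ − ⟨u, w⟩) t^{-1-s} dt. -/

import Mathlib

/-- Domain of the fractional power `L^r`: those `u ∈ H` whose spectral coefficients
satisfy `∑ₖ λₖ^(2r) |⟨u, φₖ⟩|² < ∞`. -/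
def memDom {H : Type*} [NormedAddCommGroup H] [InnerProductSpace ℝ H]
    (φ : ℕ → H) (lam : ℕ → ℝ) (r : ℝ) (u : H) : Prop :=
  Summable fun k => lam k ^ (2 * r) * (inner ℝ u (φ k) : ℝ) ^ 2

/-- The fractional power `L^r u = ∑ₖ λₖ^r ⟨u, φₖ⟩ φₖ`. -/
noncomputable def Lpow {H : Type*} [NormedAddCommGroup H] [InnerProductSpace ℝ H]
    (φ : ℕ → H) (lam : ℕ → ℝ) (r : ℝ) (u : H) : H :=
  ∑' k, (lam k ^ r * (inner ℝ u (φ k) : ℝ)) • φ k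

/-- The heat semigroup `e^{-tL} u = ∑ₖ e^{-tλₖ} ⟨u, φₖ⟩ φₖ`. -/
noncomputable def heatSG {H : Type*} [NormedAddCommGroup H] [InnerProductSpace ℝ H]
    (φ : ℕ → H) (lam : ℕ → ℝ) (t : ℝ) (u : H) : H :=
  ∑' k, (Real.exp (-t * lam k) * (inner ℝ u (φ k) : ℝ)) • φ k

open MeasureTheory

section Aux

open Set Real Filter Topology
open scoped ENNReal NNReal


lemma integrableOn_base {lam s : ℝ} (hl : 0 < lam) (hs0 : 0 < s) (hs1 : s < 1) :
    IntegrableOn (fun t : ℝ => (Real.exp (-(lam * t)) - 1) * t ^ (-1 - s)) (Set.Ioi 0) := by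
  have hmeas : ∀ (u : Set ℝ), u ⊆ Ioi 0 → MeasurableSet u →
      AEStronglyMeasurable (fun t : ℝ => (Real.exp (-(lam * t)) - 1) * t ^ (-1 - s))
        (volume.restrict u) := by
    intro u hu hmu
    apply ContinuousOn.aestronglyMeasurable _ hmu
    apply ContinuousOn.mul (by fun_prop)
    intro t ht
    exact (Real.continuousAt_rpow_const t _ (Or.inl (ne_of_gt (hu ht)))).continuousWithinAt
  rw [← Set.Ioc_union_Ioi_eq_Ioi (zero_le_one (α := ℝ))]
  apply IntegrableOn.union
  · -- on Ioc 0 1, bounded by lam * t^(-s)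
    have hint : IntegrableOn (fun t : ℝ => lam * t ^ (-s)) (Ioc (0:ℝ) 1) := by
      apply Integrable.const_mul
      have := intervalIntegral.intervalIntegrable_rpow' (a := 0) (b := 1)
        (by linarith : (-1 : ℝ) < -s)
      rwa [intervalIntegrable_iff_integrableOn_Ioc_of_le zero_le_one] at this
    apply hint.mono' (hmeas _ (fun t ht => ht.1) measurableSet_Ioc)
    filter_upwards [ae_restrict_mem measurableSet_Ioc] with t ht
    have ht0 : 0 < t := ht.1
    have h1 : |Real.exp (-(lam * t)) - 1| ≤ lam * t := by
      have hexp : Real.exp (-(lam * t)) ≤ 1 := Real.exp_le_one_iff.2 (by nlinarith)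
      rw [abs_sub_comm, abs_of_nonneg (by linarith)]
      nlinarith [Real.add_one_le_exp (-(lam * t))]
    have h2 : (0:ℝ) ≤ t ^ (-1 - s) := Real.rpow_nonneg ht0.le _
    rw [norm_mul, Real.norm_eq_abs, Real.norm_eq_abs, abs_of_nonneg h2]
    calc |Real.exp (-(lam * t)) - 1| * t ^ (-1 - s) ≤ (lam * t) * t ^ (-1 - s) := by
          apply mul_le_mul_of_nonneg_right h1 h2
      _ = lam * t ^ (-s) := by
          rw [mul_assoc]
          congr 1
          calc t * t ^ (-1 - s) = t ^ (1:ℝ) * t ^ (-1 - s) := by rw [Real.rpow_one]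
            _ = t ^ (1 + (-1 - s)) := (Real.rpow_add ht0 _ _).symm
            _ = t ^ (-s) := by ring_nf
  · -- on Ioi 1, bounded by t^(-1-s)
    have hint : IntegrableOn (fun t : ℝ => t ^ (-1 - s)) (Ioi (1:ℝ)) :=
      integrableOn_Ioi_rpow_of_lt (by linarith) one_pos
    apply hint.mono' (hmeas _ (fun t ht => Set.mem_Ioi.2 (lt_trans one_pos ht)) measurableSet_Ioi)
    filter_upwards [ae_restrict_mem measurableSet_Ioi] with t ht
    have ht0 : 0 < t := lt_trans one_pos ht
    have h2 : (0:ℝ) ≤ t ^ (-1 - s) := Real.rpow_nonneg ht0.le _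
    rw [norm_mul, Real.norm_eq_abs, Real.norm_eq_abs, abs_of_nonneg h2]
    have h1 : |Real.exp (-(lam * t)) - 1| ≤ 1 := by
      have hexp : Real.exp (-(lam * t)) ≤ 1 := Real.exp_le_one_iff.2 (by nlinarith)
      have : 0 < Real.exp (-(lam * t)) := Real.exp_pos _
      rw [abs_sub_comm, abs_of_nonneg (by linarith)]
      linarith
    nlinarith

lemma integral_base_one {s : ℝ} (hs0 : 0 < s) (hs1 : s < 1) :
    ∫ t in Set.Ioi (0:ℝ), (Real.exp (-(1 * t)) - 1) * t ^ (-1 - s) = Real.Gamma (-s) := by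
  set F : ℝ → ℝ := fun t => (Real.exp (-t) - 1) * (-(t ^ (-s)) / s) with hF
  set g : ℝ → ℝ := fun t => Real.exp (-t) * t ^ (-s) / s with hg
  set f : ℝ → ℝ := fun t => (Real.exp (-(1 * t)) - 1) * t ^ (-1 - s) with hf
  -- integrability of g on Ioi 0
  have hgint : IntegrableOn g (Ioi 0) := by
    have h := (Real.GammaIntegral_convergent (by linarith : (0:ℝ) < 1 - s)).div_const s
    apply IntegrableOn.congr_fun h _ measurableSet_Ioi
    intro t ht
    simp only [hg]
    norm_num
  have hfint : IntegrableOn f (Ioi 0) := integrableOn_base one_pos hs0 hs1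
  -- derivative
  have hderiv : ∀ t ∈ Ioi (0:ℝ), HasDerivAt F (g t + f t) t := by
    intro t ht
    have ht0 : (0:ℝ) < t := ht
    have h1 : HasDerivAt (fun t : ℝ => Real.exp (-t) - 1) (-Real.exp (-t)) t := by
      have := ((Real.hasDerivAt_exp (-t)).comp t (hasDerivAt_neg t)).sub_const 1
      simpa using this
    have h2 : HasDerivAt (fun t : ℝ => -(t ^ (-s)) / s) (-(-s * t ^ (-s - 1)) / s) t :=
      ((Real.hasDerivAt_rpow_const (p := -s) (Or.inl ht0.ne')).neg).div_const s
    have := h1.mul h2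
    refine this.congr_deriv (Eq.symm ?_)
    simp only [hg, hf]
    have hns : -s - 1 = -1 - s := by ring
    rw [hns]
    field_simp
  -- continuity at 0 from the right
  have hcont : ContinuousWithinAt F (Ici 0) 0 := by
    have hF0 : F 0 = 0 := by simp [hF]
    rw [ContinuousWithinAt, hF0]
    have habs : Tendsto (fun t : ℝ => t ^ (1 - s) / s) (nhdsWithin 0 (Ici 0)) (𝓝 0) := by
      have hc : ContinuousAt (fun t : ℝ => t ^ (1 - s) / s) 0 :=
        (Real.continuousAt_rpow_const 0 (1 - s) (Or.inr (by linarith))).div_const s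
      have := hc.continuousWithinAt (s := Ici 0)
      rw [ContinuousWithinAt] at this
      simpa [Real.zero_rpow (by linarith : 1 - s ≠ 0)] using this
    apply squeeze_zero_norm' _ habs
    filter_upwards [self_mem_nhdsWithin] with t (ht : (0:ℝ) ≤ t)
    rcases eq_or_lt_of_le ht with h | h
    · simp [hF, ← h, Real.zero_rpow (by linarith : -s ≠ 0),
        Real.zero_rpow (by linarith : 1 - s ≠ 0)]
    · have hexp : Real.exp (-t) ≤ 1 := Real.exp_le_one_iff.2 (by linarith)
      have h1 : |Real.exp (-t) - 1| ≤ t := by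
        rw [abs_sub_comm, abs_of_nonneg (by linarith)]
        nlinarith [Real.add_one_le_exp (-t)]
      have h2 : (0:ℝ) ≤ t ^ (-s) := Real.rpow_nonneg ht _
      rw [hF, Real.norm_eq_abs, abs_mul]
      have : |(-(t ^ (-s)) / s)| = t ^ (-s) / s := by
        rw [abs_div, abs_neg, abs_of_nonneg h2, abs_of_nonneg hs0.le]
      rw [this]
      calc |Real.exp (-t) - 1| * (t ^ (-s) / s) ≤ t * (t ^ (-s) / s) := by
            apply mul_le_mul_of_nonneg_right h1 (by positivity)
        _ = t ^ (1 - s) / s := by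
            rw [mul_div_assoc']
            congr 1
            calc t * t ^ (-s) = t ^ (1:ℝ) * t ^ (-s) := by rw [Real.rpow_one]
              _ = t ^ (1 + -s) := (Real.rpow_add h _ _).symm
              _ = t ^ (1 - s) := by ring_nf
  -- limit at infinity
  have htop : Tendsto F atTop (𝓝 0) := by
    have h1 : Tendsto (fun t : ℝ => Real.exp (-t) - 1) atTop (𝓝 (-1)) := by
      have := Real.tendsto_exp_atBot.comp tendsto_neg_atTop_atBot
      simpa using this.sub_const 1
    have h2 : Tendsto (fun t : ℝ => -(t ^ (-s)) / s) atTop (𝓝 0) := by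
      have := (tendsto_rpow_neg_atTop hs0).neg.div_const s
      simpa using this
    have := h1.mul h2
    simpa using this
  -- conclude
  have key := integral_Ioi_of_hasDerivAt_of_tendsto hcont hderiv (hgint.add hfint) htop
  have hF0 : F 0 = 0 := by simp [hF]
  rw [hF0, sub_zero] at key
  rw [integral_add hgint hfint] at key
  have hgval : ∫ t in Ioi (0:ℝ), g t = Real.Gamma (1 - s) / s := by
    rw [Real.Gamma_eq_integral (by linarith : (0:ℝ) < 1 - s)]
    rw [← integral_div]
    apply setIntegral_congr_fun measurableSet_Ioi
    intro t ht
    simp only [hg]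
    norm_num
  have hGamma : Real.Gamma (1 - s) = -s * Real.Gamma (-s) := by
    have := Real.Gamma_add_one (by linarith : -s ≠ 0)
    rw [show -s + 1 = 1 - s by ring] at this
    exact this
  have hfval : ∫ t in Ioi (0:ℝ), f t = -(Real.Gamma (1 - s) / s) := by linarith
  rw [hf] at hfval
  rw [hfval, hGamma]
  field_simp

lemma integral_base {lam s : ℝ} (hl : 0 < lam) (hs0 : 0 < s) (hs1 : s < 1) :
    ∫ t in Set.Ioi (0:ℝ), (Real.exp (-(lam * t)) - 1) * t ^ (-1 - s)
      = Real.Gamma (-s) * lam ^ s := by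
  have h1 : ∀ t ∈ Set.Ioi (0:ℝ), (Real.exp (-(lam * t)) - 1) * t ^ (-1 - s)
      = lam ^ (1 + s) * ((Real.exp (-(1 * (lam * t))) - 1) * (lam * t) ^ (-1 - s)) := by
    intro t ht
    have ht0 : (0:ℝ) < t := ht
    rw [one_mul, Real.mul_rpow hl.le ht0.le]
    rw [show lam ^ (1+s) * ((Real.exp (-(lam * t)) - 1) * (lam ^ (-1-s) * t ^ (-1-s)))
        = (lam ^ (1+s) * lam ^ (-1-s)) * ((Real.exp (-(lam * t)) - 1) * t ^ (-1-s)) by ring]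
    rw [← Real.rpow_add hl]
    norm_num
  rw [setIntegral_congr_fun measurableSet_Ioi h1, integral_const_mul,
    integral_comp_mul_left_Ioi (fun x => (Real.exp (-(1 * x)) - 1) * x ^ (-1 - s)) 0 hl,
    mul_zero, integral_base_one hs0 hs1, smul_eq_mul]
  rw [show lam ^ (1+s) * (lam⁻¹ * Real.Gamma (-s)) = Real.Gamma (-s) * (lam ^ (1+s) * lam⁻¹) by ring]
  congr 1
  rw [← Real.rpow_neg_one lam, ← Real.rpow_add hl]
  norm_num

lemma integral_abs_base {lam s : ℝ} (hl : 0 < lam) (hs0 : 0 < s) (hs1 : s < 1) :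
    ∫ t in Set.Ioi (0:ℝ), |(Real.exp (-(lam * t)) - 1) * t ^ (-1 - s)|
      = -Real.Gamma (-s) * lam ^ s := by
  have h1 : ∀ t ∈ Set.Ioi (0:ℝ), |(Real.exp (-(lam * t)) - 1) * t ^ (-1 - s)|
      = -((Real.exp (-(lam * t)) - 1) * t ^ (-1 - s)) := by
    intro t ht
    have ht0 : (0:ℝ) < t := ht
    apply abs_of_nonpos
    apply mul_nonpos_of_nonpos_of_nonneg
    · have : Real.exp (-(lam * t)) ≤ 1 := Real.exp_le_one_iff.2 (by nlinarith)
      linarith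
    · exact Real.rpow_nonneg ht0.le _
  rw [setIntegral_congr_fun measurableSet_Ioi h1, integral_neg, integral_base hl hs0 hs1]
  ring

lemma hasSum_inner_tsum_smul {H : Type*} [NormedAddCommGroup H] [InnerProductSpace ℝ H]
    [CompleteSpace H] (hb : HilbertBasis ℕ ℝ H) (coef : ℕ → ℝ)
    (hc : Summable fun k => coef k ^ 2) (w : H) :
    HasSum (fun k => coef k * (inner ℝ (hb k) w : ℝ))
      (inner ℝ (∑' k, coef k • hb k) w : ℝ) := by
  have hmem : Memℓp coef 2 := by
    apply memℓp_gen
    have h2 : (2 : ℝ≥0∞).toReal = (2 : ℝ) := by norm_num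
    rw [h2]
    have : ∀ k, ‖coef k‖ ^ (2:ℝ) = coef k ^ 2 := by
      intro k
      rw [show (2:ℝ) = ((2:ℕ):ℝ) by norm_num, Real.rpow_natCast, Real.norm_eq_abs, sq_abs]
    exact hc.congr fun k => (this k).symm
  set fl : lp (fun _ : ℕ => ℝ) 2 := ⟨coef, hmem⟩ with hfl
  have hsum : HasSum (fun i => coef i • hb i) (hb.repr.symm fl) := hb.hasSum_repr_symm fl
  have htsum : (∑' k, coef k • hb k) = hb.repr.symm fl := hsum.tsum_eq
  rw [htsum]
  have h2 := hsum.mapL (innerSL ℝ w)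
  have h3 : (fun i => (innerSL ℝ w) (coef i • hb i))
      = fun i => coef i * (inner ℝ (hb i) w : ℝ) := by
    funext i
    simp only [innerSL_apply_apply, real_inner_smul_right]
    rw [real_inner_comm]
  rw [h3] at h2
  rwa [show (inner ℝ (hb.repr.symm fl) w : ℝ) = (innerSL ℝ w) (hb.repr.symm fl) by
    simp only [innerSL_apply_apply]; exact real_inner_comm _ _]


end Aux

/-- Heat semigroup representation of the positive fractional power, weak form
(Lemma 2.6(1)): for `s ∈ (0,1)`, `u ∈ D(L^s)` and `w ∈ H`, the function
`t ↦ (⟨e^{-tL}u, w⟩ - ⟨u, w⟩) t^(-1-s)` is integrable on `(0,∞)` and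
`⟨L^s u, w⟩ = (1/Γ(-s)) ∫₀^∞ (⟨e^{-tL}u, w⟩ - ⟨u, w⟩) t^(-1-s) dt`. -/
theorem inner_Lpow_eq_heat_integral
    {H : Type*} [NormedAddCommGroup H] [InnerProductSpace ℝ H] [CompleteSpace H]
    (hb : HilbertBasis ℕ ℝ H) (lam : ℕ → ℝ)
    (hpos : 0 < lam 0) (hle : ∀ k, lam 0 ≤ lam k)
    (s : ℝ) (hs0 : 0 < s) (hs1 : s < 1)
    (u : H) (hu : memDom (⇑hb) lam s u) (w : H) :
    IntegrableOn
      (fun t : ℝ => ((inner ℝ (heatSG (⇑hb) lam t u) w : ℝ) - (inner ℝ u w : ℝ)) * t ^ (-1 - s))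
      (Set.Ioi 0) ∧
    (inner ℝ (Lpow (⇑hb) lam s u) w : ℝ) = (1 / Real.Gamma (-s)) *
      ∫ t in Set.Ioi (0 : ℝ),
        ((inner ℝ (heatSG (⇑hb) lam t u) w : ℝ) - (inner ℝ u w : ℝ)) * t ^ (-1 - s) := by
  open Set Real Filter Topology in
  have hlam : ∀ k, 0 < lam k := fun k => lt_of_lt_of_le hpos (hle k)
  set a : ℕ → ℝ := fun k => (inner ℝ u (hb k) : ℝ) with ha
  set c : ℕ → ℝ := fun k => (inner ℝ (hb k) w : ℝ) with hc
  -- basic summability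
  have hsa : Summable fun k => a k ^ 2 := by
    have h := hb.summable_inner_mul_inner u u
    exact h.congr fun k => by rw [sq]; congr 1; exact (real_inner_comm _ _)
  have hsc : Summable fun k => c k ^ 2 := by
    have h := hb.summable_inner_mul_inner w w
    exact h.congr fun k => by rw [sq]; congr 1; exact (real_inner_comm _ _)
  have hsac : Summable fun k => |a k * c k| := by
    apply Summable.of_nonneg_of_le (fun k => abs_nonneg _) _ ((hsa.add hsc).div_const 2)
    intro k
    rw [abs_mul]
    nlinarith [sq_nonneg (|a k| - |c k|), sq_abs (a k), sq_abs (c k)]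
  have hu' : Summable fun k => lam k ^ (2 * s) * a k ^ 2 := hu
  -- inner ℝ product expansions
  have hinner_uw : HasSum (fun k => a k * c k) ((inner ℝ u w : ℝ)) :=
    hb.hasSum_inner_mul_inner u w
  have hheat : ∀ t : ℝ, 0 ≤ t → HasSum (fun k => (Real.exp (-t * lam k) * a k) * c k)
      ((inner ℝ (heatSG (⇑hb) lam t u) w : ℝ)) := by
    intro t ht
    apply hasSum_inner_tsum_smul hb _ _ w
    apply Summable.of_nonneg_of_le (fun k => sq_nonneg _) _ hsa
    intro k
    rw [mul_pow]
    have h1 : Real.exp (-t * lam k) ≤ 1 :=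
      Real.exp_le_one_iff.2 (by nlinarith [(hlam k).le])
    have h2 : Real.exp (-t * lam k) ^ 2 ≤ 1 := by nlinarith [Real.exp_pos (-t * lam k)]
    calc Real.exp (-t * lam k) ^ 2 * a k ^ 2 ≤ 1 * a k ^ 2 :=
          mul_le_mul_of_nonneg_right h2 (sq_nonneg _)
      _ = a k ^ 2 := one_mul _
  have hLs : HasSum (fun k => (lam k ^ s * a k) * c k)
      ((inner ℝ (Lpow (⇑hb) lam s u) w : ℝ)) := by
    apply hasSum_inner_tsum_smul hb _ _ w
    apply hu'.congr
    intro k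
    rw [mul_pow]
    congr 1
    rw [← Real.rpow_natCast (lam k ^ s) 2, ← Real.rpow_mul (hlam k).le]
    norm_num [mul_comm]
  -- the summand functions
  set G : ℕ → ℝ → ℝ :=
    fun k t => ((Real.exp (-(lam k * t)) - 1) * t ^ (-1 - s)) * (a k * c k) with hG
  have hfun : ∀ t ∈ Ioi (0:ℝ),
      ((inner ℝ (heatSG (⇑hb) lam t u) w : ℝ) - (inner ℝ u w : ℝ)) * t ^ (-1 - s)
        = ∑' k, G k t := by
    intro t ht
    have h1 := ((hheat t (le_of_lt ht)).sub hinner_uw).mul_right (t ^ (-1 - s))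
    have h2 : (fun k => (Real.exp (-t * lam k) * a k * c k - a k * c k) * t ^ (-1 - s))
        = fun k => G k t := by
      funext k
      simp only [hG]
      rw [show -(lam k * t) = -t * lam k by ring]
      ring
    rw [h2] at h1
    exact h1.tsum_eq.symm
  have hGint : ∀ k, IntegrableOn (fun t => G k t) (Ioi 0) := fun k =>
    (integrableOn_base (hlam k) hs0 hs1).mul_const _
  have hGvalue : ∀ k, ∫ t in Ioi (0:ℝ), G k t
      = (Real.Gamma (-s) * lam k ^ s) * (a k * c k) := by
    intro k
    rw [hG]
    simp only
    rw [integral_mul_const, integral_base (hlam k) hs0 hs1]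
  have hGnorm : ∀ k, ∫ t in Ioi (0:ℝ), ‖G k t‖
      = (-Real.Gamma (-s) * lam k ^ s) * |a k * c k| := by
    intro k
    have : ∀ t : ℝ, ‖G k t‖ = |(Real.exp (-(lam k * t)) - 1) * t ^ (-1 - s)| * |a k * c k| := by
      intro t
      rw [hG]
      simp only [Real.norm_eq_abs, abs_mul]
    simp_rw [this]
    rw [integral_mul_const, integral_abs_base (hlam k) hs0 hs1]
  have hkey : Summable fun k => (lam k ^ s) * |a k * c k| := by
    apply Summable.of_nonneg_of_le
      (fun k => mul_nonneg (Real.rpow_nonneg (hlam k).le _) (abs_nonneg _)) _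
      ((hu'.add hsc).div_const 2)
    intro k
    rw [abs_mul]
    have h1 : lam k ^ (2 * s) = (lam k ^ s) ^ 2 := by
      rw [← Real.rpow_natCast (lam k ^ s) 2, ← Real.rpow_mul (hlam k).le]
      norm_num [mul_comm]
    nlinarith [sq_nonneg (lam k ^ s * |a k| - |c k|), sq_abs (a k), sq_abs (c k),
      Real.rpow_nonneg (hlam k).le s, abs_nonneg (a k), abs_nonneg (c k)]
  have hsum_norm : Summable fun k => ∫ t in Ioi (0:ℝ), ‖G k t‖ := by
    apply Summable.congr _ (fun k => (hGnorm k).symm)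
    have := hkey.mul_left (-Real.Gamma (-s))
    exact this.congr fun k => by ring
  -- integrability of the full integrand
  have hIntOn : IntegrableOn
      (fun t : ℝ => ((inner ℝ (heatSG (⇑hb) lam t u) w : ℝ) - (inner ℝ u w : ℝ)) * t ^ (-1 - s))
      (Ioi 0) := by
    constructor
    · -- a.e. strong measurability
      apply aestronglyMeasurable_of_tendsto_ae (f := fun n t => ∑ k ∈ Finset.range n, G k t)
        atTop
      · intro n
        exact Finset.aestronglyMeasurable_fun_sum _ fun k _ => (hGint k).1
      · filter_upwards [ae_restrict_mem measurableSet_Ioi] with t ht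
        have h1 := ((hheat t (le_of_lt ht)).sub hinner_uw).mul_right (t ^ (-1 - s))
        have h2 : (fun k => (Real.exp (-t * lam k) * a k * c k - a k * c k) * t ^ (-1 - s))
            = fun k => G k t := by
          funext k
          simp only [hG]
          rw [show -(lam k * t) = -t * lam k by ring]
          ring
        rw [h2] at h1
        exact h1.tendsto_sum_nat
    · -- finite integral
      rw [hasFiniteIntegral_iff_norm]
      have hGsummable : ∀ t ∈ Ioi (0:ℝ), Summable fun k => ‖G k t‖ := by
        intro t ht
        have ht0 : (0:ℝ) < t := ht
        apply Summable.of_nonneg_of_le (fun k => norm_nonneg _) _ (hsac.mul_left (t ^ (-1 - s)))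
        intro k
        have hx : ‖G k t‖ = |Real.exp (-(lam k * t)) - 1| * t ^ (-1 - s) * |a k * c k| := by
          rw [hG]
          simp only [Real.norm_eq_abs]
          rw [abs_mul, abs_mul, abs_of_nonneg (Real.rpow_nonneg ht0.le (-1 - s))]
        rw [hx]
        have h1 : |Real.exp (-(lam k * t)) - 1| ≤ 1 := by
          have hexp : Real.exp (-(lam k * t)) ≤ 1 :=
            Real.exp_le_one_iff.2 (by nlinarith [(hlam k).le])
          have := Real.exp_pos (-(lam k * t))
          rw [abs_sub_comm, abs_of_nonneg (by linarith)]
          linarith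
        calc |Real.exp (-(lam k * t)) - 1| * t ^ (-1 - s) * |a k * c k|
            ≤ 1 * t ^ (-1 - s) * |a k * c k| := by
              apply mul_le_mul_of_nonneg_right _ (abs_nonneg _)
              exact mul_le_mul_of_nonneg_right h1 (Real.rpow_nonneg ht0.le _)
          _ = t ^ (-1 - s) * |a k * c k| := by ring
      calc ∫⁻ t, ENNReal.ofReal
              ‖((inner ℝ (heatSG (⇑hb) lam t u) w : ℝ) - (inner ℝ u w : ℝ)) * t ^ (-1 - s)‖
              ∂(volume.restrict (Ioi 0))
          ≤ ∫⁻ t, ∑' k, ENNReal.ofReal ‖G k t‖ ∂(volume.restrict (Ioi 0)) := by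
            apply lintegral_mono_ae
            filter_upwards [ae_restrict_mem measurableSet_Ioi] with t ht
            rw [hfun t ht]
            calc ENNReal.ofReal ‖∑' k, G k t‖
                ≤ ENNReal.ofReal (∑' k, ‖G k t‖) :=
                  ENNReal.ofReal_le_ofReal (norm_tsum_le_tsum_norm (hGsummable t ht))
              _ = ∑' k, ENNReal.ofReal ‖G k t‖ :=
                  ENNReal.ofReal_tsum_of_nonneg (fun k => norm_nonneg _) (hGsummable t ht)
        _ = ∑' k, ∫⁻ t, ENNReal.ofReal ‖G k t‖ ∂(volume.restrict (Ioi 0)) := by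
            apply lintegral_tsum
            intro k
            exact ((hGint k).1.norm.aemeasurable).ennreal_ofReal
        _ < ⊤ := by
            have heq : ∀ k, ∫⁻ t, ENNReal.ofReal ‖G k t‖ ∂(volume.restrict (Ioi 0))
                = ENNReal.ofReal (∫ t in Ioi (0:ℝ), ‖G k t‖) := by
              intro k
              rw [ofReal_integral_norm_eq_lintegral_enorm (hGint k)]
              apply lintegral_congr
              intro t
              rw [ofReal_norm_eq_enorm]
            simp_rw [heq]
            rw [← ENNReal.ofReal_tsum_of_nonneg
              (fun k => integral_nonneg fun t => norm_nonneg _) hsum_norm]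
            exact ENNReal.ofReal_lt_top
  refine ⟨hIntOn, ?_⟩
  -- the integral computation
  have hswap : ∫ t in Ioi (0:ℝ), ∑' k, G k t = ∑' k, ∫ t in Ioi (0:ℝ), G k t :=
    (integral_tsum_of_summable_integral_norm hGint hsum_norm).symm
  have hGammaNe : Real.Gamma (-s) ≠ 0 := by
    apply Real.Gamma_ne_zero
    intro m
    intro hm
    have hms : (m : ℝ) = s := by linarith
    rcases Nat.eq_zero_or_pos m with h0 | h1
    · rw [h0] at hms; norm_num at hms; linarith
    · have : (1:ℝ) ≤ (m:ℝ) := by exact_mod_cast h1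
      linarith
  have hval : ∫ t in Ioi (0:ℝ),
      ((inner ℝ (heatSG (⇑hb) lam t u) w : ℝ) - (inner ℝ u w : ℝ)) * t ^ (-1 - s)
      = Real.Gamma (-s) * (inner ℝ (Lpow (⇑hb) lam s u) w : ℝ) := by
    rw [setIntegral_congr_fun measurableSet_Ioi hfun, hswap]
    have h1 : ∀ k, ∫ t in Ioi (0:ℝ), G k t
        = Real.Gamma (-s) * ((lam k ^ s * a k) * c k) := by
      intro k
      rw [hGvalue k]
      ring
    rw [tsum_congr h1, tsum_mul_left, hLs.tsum_eq]
  rw [hval]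
  field_simp
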